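/- Parametrized fixed points preserve naturality: if α_{X,Y} : hom(FX,FY) × hom(GX,GY) → hom(FX,FY) is a family of Scott-continuous maps natural in X and Y, in the sense that α_{X',Y'}(Ff ∘ h ∘ Fg, Gf ∘ p ∘ Gg) = Ff ∘ α_{X,Y}(h, p) ∘ Fg for all f : Y → Y', g : X' → X, then the family pfix α_{X,Y} : hom(GX,GY) → hom(FX,FY) is natural: (pfix α_{X',Y'})(Gf ∘ p ∘ Gg) = Ff ∘ (pfix α_{X,Y})(p) ∘ Fg. -/
import Mathlib


open CategoryTheory

universe v u

/-- The `n`-fold parametrized iterate: `α⁰(x,p) = x`, `α^{n+1}(x,p) = α(αⁿ(x,p), p)`. -/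
def pIter {A B : Type*} (α : A × B → A) : ℕ → A → B → A
  | 0, x, _ => x
  | n + 1, x, p => α (pIter α n x p, p)

/-- Parametrized fixed points preserve naturality: if
`α_{X,Y} : hom(FX,FY) × hom(GX,GY) → hom(FX,FY)` is a family of Scott-continuous
maps natural in `X` and `Y`, in the sense that
`α_{X',Y'}(Ff ∘ h ∘ Fg, Gf ∘ p ∘ Gg) = Ff ∘ α_{X,Y}(h,p) ∘ Fg` for all
`f : Y ⟶ Y'`, `g : X' ⟶ X`, then the family
`pfix α_{X,Y} : hom(GX,GY) → hom(FX,FY)`, with `(pfix α)(p) = sup_n αⁿ(⊥,p)`,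
is natural: `(pfix α_{X',Y'})(Gf ∘ p ∘ Gg) = Ff ∘ (pfix α_{X,Y})(p) ∘ Fg`. -/
theorem pfix_preserves_naturality {C : Type u} [Category.{v} C]
    [∀ X Y : C, CompletePartialOrder (X ⟶ Y)] [∀ X Y : C, OrderBot (X ⟶ Y)]
    (comp_cont : ∀ {X Y Z : C} (f : X ⟶ Y), ScottContinuous (fun g : Y ⟶ Z => f ≫ g))
    (comp_cont' : ∀ {X Y Z : C} (g : Y ⟶ Z), ScottContinuous (fun f : X ⟶ Y => f ≫ g))
    (comp_strict : ∀ {X Y Z : C} (f : X ⟶ Y) (g : Y ⟶ Z),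
      f ≫ (⊥ : Y ⟶ Z) = (⊥ : X ⟶ Z) ∧ (⊥ : X ⟶ Y) ≫ g = (⊥ : X ⟶ Z))
    (F G : C ⥤ C)
    (α : ∀ X Y : C, (F.obj X ⟶ F.obj Y) × (G.obj X ⟶ G.obj Y) → (F.obj X ⟶ F.obj Y))
    (hcont : ∀ X Y : C, ScottContinuous (α X Y))
    (hnat : ∀ {X X' Y Y' : C} (f : Y ⟶ Y') (g : X' ⟶ X)
      (h : F.obj X ⟶ F.obj Y) (p : G.obj X ⟶ G.obj Y),
      α X' Y' (F.map g ≫ h ≫ F.map f, G.map g ≫ p ≫ G.map f) =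
        F.map g ≫ α X Y (h, p) ≫ F.map f) :
    ∀ {X X' Y Y' : C} (f : Y ⟶ Y') (g : X' ⟶ X) (p : G.obj X ⟶ G.obj Y),
      sSup (Set.range fun n => pIter (α X' Y') n ⊥ (G.map g ≫ p ≫ G.map f)) =
        F.map g ≫ sSup (Set.range fun n => pIter (α X Y) n ⊥ p) ≫ F.map f := by
  intro X X' Y Y' f g p
  -- pointwise naturality of iterates
  have hiter : ∀ n, pIter (α X' Y') n ⊥ (G.map g ≫ p ≫ G.map f) =
      F.map g ≫ pIter (α X Y) n ⊥ p ≫ F.map f := by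
    intro n
    induction n with
    | zero =>
      show (⊥ : F.obj X' ⟶ F.obj Y') = F.map g ≫ (⊥ : F.obj X ⟶ F.obj Y) ≫ F.map f
      rw [(comp_strict (⊥ : F.obj X ⟶ F.obj Y) (F.map f)).2,
        (comp_strict (F.map g) (⊥ : F.obj X ⟶ F.obj Y')).1]
    | succ n ih =>
      simp only [pIter, ih, hnat]
  have hmonoα : Monotone (α X Y) := (hcont X Y).monotone
  have hmono : Monotone (fun n => pIter (α X Y) n ⊥ p) := by
    apply monotone_nat_of_le_succ
    intro n
    induction n with
    | zero => exact bot_le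
    | succ n ih =>
      exact hmonoα (Prod.mk_le_mk.mpr ⟨ih, le_refl p⟩)
  have hdir : DirectedOn (· ≤ ·) (Set.range fun n => pIter (α X Y) n ⊥ p) :=
    (hmono.directed_le).directedOn_range
  have hne : (Set.range fun n => pIter (α X Y) n ⊥ p).Nonempty := (Set.range_nonempty _)
  have hlub : IsLUB (Set.range fun n => pIter (α X Y) n ⊥ p)
      (sSup (Set.range fun n => pIter (α X Y) n ⊥ p)) :=
    CompletePartialOrder.lubOfDirected _ hdir
  have hlub2 := comp_cont' (F.map f) hne hdir hlub
  have himg1 : ((fun h => h ≫ F.map f) '' (Set.range fun n => pIter (α X Y) n ⊥ p)) =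
      Set.range fun n => pIter (α X Y) n ⊥ p ≫ F.map f := by
    rw [← Set.range_comp]; rfl
  rw [himg1] at hlub2
  have hmono1 : Monotone (fun n => pIter (α X Y) n ⊥ p ≫ F.map f) :=
    fun a b hab => (comp_cont' (F.map f)).monotone (hmono hab)
  have hlub3 := comp_cont (F.map g) (Set.range_nonempty _) hmono1.directed_le.directedOn_range hlub2
  have himg2 : ((fun h => F.map g ≫ h) ''
      (Set.range fun n => pIter (α X Y) n ⊥ p ≫ F.map f)) =
      Set.range fun n => F.map g ≫ pIter (α X Y) n ⊥ p ≫ F.map f := by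
    rw [← Set.range_comp]; rfl
  rw [himg2] at hlub3
  have hrange : (Set.range fun n => pIter (α X' Y') n ⊥ (G.map g ≫ p ≫ G.map f)) =
      Set.range fun n => F.map g ≫ pIter (α X Y) n ⊥ p ≫ F.map f := by
    exact congrArg _ (funext hiter)
  rw [hrange]
  have hdir2 : DirectedOn (· ≤ ·)
      (Set.range fun n => F.map g ≫ pIter (α X Y) n ⊥ p ≫ F.map f) := by
    apply Monotone.directed_le (f := fun n => F.map g ≫ pIter (α X Y) n ⊥ p ≫ F.map f)
      (fun a b hab => ?_) |>.directedOn_range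
    exact (comp_cont (F.map g)).monotone ((comp_cont' (F.map f)).monotone (hmono hab))
  exact (CompletePartialOrder.lubOfDirected _ hdir2).unique hlub3
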